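/- Abstract shift lemma: Let H be a real inner product space, let L₀ be an invertible linear operator on a subspace H₀ of mean-zero elements with projection P onto H₀, and let a⁺, a⁻ be mutually adjoint linear maps with a⁻1 = 0. Define f_0 = 1, f_j = (-L̂₀)^{-1} a⁺ f_{j-1} (with L̂₀ the adjoint of L₀, all inverses mapping into H₀), and φ_0 = (-L₀)^{-1} P(p), φ_j = (-L₀)^{-1} P(a⁻ φ_{j-1}) + c_j for scalars c_j. Then for all m ≥ 0 and all k ≥ m: ⟨a⁻φ_0, f_k⟩ = ⟨a⁻φ_m, f_{k-m}⟩. -/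
import Mathlib


open scoped RealInnerProductSpace

/-- Abstract shift lemma: with `f_0 = 1`, `f_j = (-L̂₀)⁻¹ a⁺ f_{j-1}`,
`φ_0 = (-L₀)⁻¹ P p` and `φ_j = (-L₀)⁻¹ P (a⁻ φ_{j-1}) + c_j`, one has
`⟨a⁻φ_0, f_k⟩ = ⟨a⁻φ_m, f_{k-m}⟩` for all `m ≤ k`. -/
theorem abstract_shift_lemma {H : Type*} [NormedAddCommGroup H] [InnerProductSpace ℝ H]
    (one p : H) (hone : ⟪one, one⟫ = 1)
    (L0 Lhat aplus aminus : H →ₗ[ℝ] H)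
    (hL0mem : ∀ u, ⟪one, u⟫ = 0 → ⟪one, L0 u⟫ = 0)
    (hLhatmem : ∀ u, ⟪one, u⟫ = 0 → ⟪one, Lhat u⟫ = 0)
    (hadjL : ∀ u v, ⟪one, u⟫ = 0 → ⟪one, v⟫ = 0 → ⟪L0 u, v⟫ = ⟪u, Lhat v⟫)
    (hadja : ∀ u v, ⟪aplus u, v⟫ = ⟪u, aminus v⟫)
    (haminone : aminus one = 0)
    (f : ℕ → H) (hf0 : f 0 = one)
    (hf : ∀ j : ℕ, ⟪one, f (j + 1)⟫ = 0 ∧ Lhat (f (j + 1)) = -(aplus (f j)))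
    (φ : ℕ → H) (c : ℕ → ℝ)
    (hφ0 : ⟪one, φ 0⟫ = 0 ∧ L0 (φ 0) = -(p - ⟪one, p⟫ • one))
    (hφ : ∀ j : ℕ, ⟪one, φ (j + 1) - c (j + 1) • one⟫ = 0 ∧
      L0 (φ (j + 1) - c (j + 1) • one)
        = -(aminus (φ j) - ⟪one, aminus (φ j)⟫ • one)) :
    ∀ m k : ℕ, m ≤ k → ⟪aminus (φ 0), f k⟫ = ⟪aminus (φ m), f (k - m)⟫ := by
  have key : ∀ j k : ℕ, ⟪aminus (φ j), f (k + 1)⟫ = ⟪aminus (φ (j + 1)), f k⟫ := by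
    intro j k
    obtain ⟨hm, hE⟩ := hφ j
    obtain ⟨hfm, hfE⟩ := hf k
    have h1 : ⟪aminus (φ j), f (k + 1)⟫
        = ⟪aminus (φ j) - ⟪one, aminus (φ j)⟫ • one, f (k + 1)⟫ := by
      simp [inner_sub_left, real_inner_smul_left, hfm]
    have h2 : aminus (φ j) - ⟪one, aminus (φ j)⟫ • one
        = -(L0 (φ (j + 1) - c (j + 1) • one)) := by rw [hE, neg_neg]
    rw [h1, h2, inner_neg_left, hadjL _ _ hm hfm, hfE, inner_neg_right, neg_neg,
      real_inner_comm, hadja]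
    have h3 : aminus (φ (j + 1) - c (j + 1) • one) = aminus (φ (j + 1)) := by
      simp [map_sub, map_smul, haminone]
    rw [h3, real_inner_comm]
  intro m
  induction m with
  | zero => intro k _; simp
  | succ m ih =>
    intro k hk
    have h4 : k - m = (k - (m + 1)) + 1 := by omega
    rw [ih k (by omega), h4, key m (k - (m + 1))]
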